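/- arXiv:1706.04644 — 3 statements merged into one kernel-verified Lean document; each statement's English description precedes it below -/
import Mathlib

section
/- For each r = 1,...,n, the elementary symmetric polynomial σ_r : ℝ^n → ℝ is hyperbolic with respect to the vector a = (1,1,...,1), i.e., for every x ∈ ℝ^n the polynomial s ↦ σ_r(sa + x) has r real roots counted with multiplicity. -/
open Finset

/-- The `r`-th elementary symmetric polynomial of `x ∈ ℝⁿ` (with `σ_0 = 1`). -/
noncomputable def esym (n r : ℕ) (x : Fin n → ℝ) : ℝ :=
  ∑ s ∈ (Finset.univ : Finset (Fin n)).powersetCard r, ∏ i ∈ s, x i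

/-- A function `P : ℝⁿ → ℝ` is hyperbolic of degree `m` with respect to `a ∈ ℝⁿ` if for
every `x` the polynomial `s ↦ P(sa + x)` has `m` real roots counted with multiplicity. -/
def IsHyperbolic {n : ℕ} (m : ℕ) (P : (Fin n → ℝ) → ℝ) (a : Fin n → ℝ) : Prop :=
  ∀ x : Fin n → ℝ, ∃ (c : ℝ) (roots : Fin m → ℝ),
    ∀ s : ℝ, P (s • a + x) = c * ∏ i : Fin m, (s - roots i)

open Polynomial in
/-- The derivative of a real polynomial that splits also splits (Rolle). -/
lemma splits_derivative_of_splits (p : ℝ[X]) (h : p.Splits) :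
    (derivative p).Splits := by
  rcases eq_or_ne (derivative p) 0 with h0 | h0
  · rw [h0]; exact Splits.zero
  have hp : p ≠ 0 := by
    intro hp
    apply h0
    rw [hp, derivative_zero]
  rw [splits_iff_card_roots] at h ⊢
  have h1 : Multiset.card (derivative p).roots ≤ (derivative p).natDegree :=
    card_roots' _
  have h2 : p.natDegree ≤ Multiset.card (derivative p).roots + 1 := by
    rw [← h]; exact p.card_roots_le_derivative
  have h3 : (derivative p).natDegree ≤ p.natDegree - 1 := natDegree_derivative_le p
  omega

open Polynomial in
lemma splits_iterate_derivative_of_splits (k : ℕ) (p : ℝ[X])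
    (h : p.Splits) : (derivative^[k] p).Splits := by
  induction k with
  | zero => exact h
  | succ k ih =>
    rw [Function.iterate_succ_apply']
    exact splits_derivative_of_splits _ ih

open Polynomial in
/-- For each `r = 1, ..., n`, the elementary symmetric polynomial `σ_r` is hyperbolic
with respect to `a = (1, ..., 1)`. -/
theorem esym_isHyperbolic (n r : ℕ) (hr : 1 ≤ r) (hrn : r ≤ n) :
    IsHyperbolic r (esym n r) (fun _ => (1 : ℝ)) := by
  intro x
  set P : ℝ[X] := ∏ i : Fin n, (X + C (x i)) with hP
  have hmon : ∀ i ∈ (univ : Finset (Fin n)), (X + C (x i)).Monic :=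
    fun i _ => monic_X_add_C _
  have hPdeg : P.natDegree = n := by
    rw [hP, natDegree_prod_of_monic _ _ hmon]
    simp
  have hPs : P.Splits := by
    apply Splits.prod
    intro i _
    have : (X : ℝ[X]) + C (x i) = X - C (-(x i)) := by
      rw [map_neg, sub_neg_eq_add]
    rw [this]
    exact Splits.X_sub_C _
  set Q : ℝ[X] := hasseDeriv (n - r) P with hQ
  have hQdeg : Q.natDegree = r := by
    rw [hQ, natDegree_hasseDeriv, hPdeg]; omega
  have hsmul : ((n - r).factorial • Q : ℝ[X]) = derivative^[n - r] P := by
    rw [hQ, ← Polynomial.factorial_smul_hasseDeriv]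
    rfl
  have hQs : Q.Splits := by
    have hD := splits_iterate_derivative_of_splits (n - r) P hPs
    rw [← hsmul] at hD
    rw [splits_iff_card_roots] at hD ⊢
    have hne : ((n - r).factorial : ℝ) ≠ 0 := by
      exact_mod_cast (Nat.factorial_pos _).ne'
    have hcast : ((n - r).factorial • Q : ℝ[X]) = ((n - r).factorial : ℝ) • Q := by
      rw [Nat.cast_smul_eq_nsmul]
    rw [hcast, roots_smul_nonzero _ hne, smul_eq_C_mul, natDegree_C_mul hne] at hD
    exact hD
  have hcard : Multiset.card Q.roots = r := by
    rw [splits_iff_card_roots.mp hQs, hQdeg]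
  -- extract the roots as a function Fin r → ℝ
  set l : List ℝ := Q.roots.toList with hl
  have hlen : l.length = r := by
    rw [hl, Multiset.length_toList, hcard]
  have hfac : Q = C Q.leadingCoeff * (Q.roots.map fun a => X - C a).prod :=
    hQs.eq_prod_roots
  refine ⟨Q.leadingCoeff, fun i => l.get (Fin.cast hlen.symm i), fun s => ?_⟩
  -- Step 1: the evaluation of Q at s is esym of the shifted vector
  have hshift : (s • (fun _ => (1 : ℝ)) + x) = fun i => s + x i := by
    funext i
    simp
  have hkey : esym n r (fun i => s + x i) = Q.eval s := by
    have hcomp : (∏ i : Fin n, (X + C (s + x i))) = P.comp (X + C s) := by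
      rw [hP, Polynomial.prod_comp]
      refine Finset.prod_congr rfl fun i _ => ?_
      rw [add_comp, X_comp, C_comp, map_add]
      ring
    have hco : (∏ i : Fin n, (X + C (s + x i))).coeff (n - r)
        = ∑ t ∈ (univ : Finset (Fin n)).powersetCard r, ∏ i ∈ t, (s + x i) := by
      rw [Finset.prod_X_add_C_coeff (univ : Finset (Fin n)) (fun i => s + x i)
        (k := n - r) (by simp)]
      congr 2
      simp only [Finset.card_univ, Fintype.card_fin]
      omega
    have htay : (P.comp (X + C s)).coeff (n - r) = Q.eval s := by
      rw [← taylor_apply, taylor_coeff, hQ]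
    rw [esym, ← hco, hcomp, htay]
  rw [hshift, hkey]
  conv_lhs => rw [hfac]
  rw [eval_mul, eval_C, eval_multiset_prod, Multiset.map_map]
  congr 1
  simp only [Function.comp_def, eval_sub, eval_X, eval_C]
  rw [← Multiset.coe_toList Q.roots, ← hl, Multiset.map_coe, Multiset.prod_coe]
  have hlist : (List.map (fun a => s - a) l).prod = ∏ i : Fin l.length, (s - l.get i) := by
    conv_lhs => rw [← List.ofFn_get l]
    rw [List.map_ofFn, List.prod_ofFn]
    rfl
  rw [hlist]
  exact (Fin.prod_congr' (fun i => s - l.get i) hlen.symm).symm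
end

section
/- For r = 1,...,n, let Γ_r denote the connected component of {x ∈ ℝ^n : σ_r(x) ≠ 0} containing the vector (1,...,1). Then Γ_1 ⊃ Γ_2 ⊃ ... ⊃ Γ_n, i.e., the Gårding cones are nested decreasingly. -/
open Finset

open Polynomial

noncomputable def Pe (n : ℕ) (x : Fin n → ℝ) : Polynomial ℝ :=
  ∏ i : Fin n, (X + C (x i))

lemma esym_zero (n : ℕ) (x : Fin n → ℝ) : esym n 0 x = 1 := by
  simp [esym]

lemma esym_one (n k : ℕ) (hk : k ≤ n) : esym n k (fun _ => (1 : ℝ)) = (n.choose k : ℝ) := by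
  simp [esym, Finset.card_powersetCard]

lemma esym_smul (n k : ℕ) (c : ℝ) (x : Fin n → ℝ) :
    esym n k (fun i => c * x i) = c ^ k * esym n k x := by
  unfold esym
  rw [Finset.mul_sum]
  refine Finset.sum_congr rfl fun s hs => ?_
  rw [Finset.prod_mul_distrib, Finset.prod_const, (Finset.mem_powersetCard.mp hs).2]

lemma Pe_monic (n : ℕ) (x : Fin n → ℝ) : (Pe n x).Monic :=
  monic_prod_of_monic _ _ fun i _ => monic_X_add_C (x i)

lemma Pe_natDegree (n : ℕ) (x : Fin n → ℝ) : (Pe n x).natDegree = n := by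
  rw [Pe, natDegree_prod _ _ fun i _ => X_add_C_ne_zero (x i)]
  simp

lemma Pe_coeff (n j : ℕ) (hj : j ≤ n) (x : Fin n → ℝ) :
    (Pe n x).coeff (n - j) = esym n j x := by
  have h : n - j ≤ (Finset.univ : Finset (Fin n)).card := by simp
  have := Finset.prod_X_add_C_coeff (Finset.univ : Finset (Fin n)) x h
  simp only [Finset.card_univ, Fintype.card_fin] at this
  rw [Pe, this, Nat.sub_sub_self hj, esym]

lemma Pe_roots_card (n : ℕ) (x : Fin n → ℝ) : Multiset.card (Pe n x).roots = n := by
  have h : Pe n x = ((Finset.univ.val.map (fun i => -x i)).map (fun a => X - C a)).prod := by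
    rw [Multiset.map_map]
    unfold Pe
    rw [Finset.prod]
    congr 1
    apply Multiset.map_congr rfl
    intro i _
    simp [sub_neg_eq_add]
  rw [h, roots_multiset_prod_X_sub_C]
  simp

noncomputable def qp (n j : ℕ) (x : Fin n → ℝ) : Polynomial ℝ :=
  hasseDeriv (n - j) (Pe n x)

lemma qp_coeff (n j : ℕ) (hj : j ≤ n) (x : Fin n → ℝ) (i : ℕ) (hi : i ≤ j) :
    (qp n j x).coeff i = ((i + (n - j)).choose (n - j) : ℝ) * esym n (j - i) x := by
  rw [qp, hasseDeriv_coeff]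
  congr 1
  have h : i + (n - j) = n - (j - i) := by omega
  rw [h, Pe_coeff n (j - i) (by omega)]

lemma qp_coeff_hi (n j : ℕ) (hj : j ≤ n) (x : Fin n → ℝ) (i : ℕ) (hi : j < i) :
    (qp n j x).coeff i = 0 := by
  rw [qp, hasseDeriv_coeff, coeff_eq_zero_of_natDegree_lt, mul_zero]
  rw [Pe_natDegree]; omega

lemma qp_natDegree (n j : ℕ) (hj : j ≤ n) (x : Fin n → ℝ) : (qp n j x).natDegree = j := by
  refine le_antisymm (natDegree_le_iff_coeff_eq_zero.mpr fun m hm => qp_coeff_hi n j hj x m hm)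
    (le_natDegree_of_ne_zero ?_)
  rw [qp_coeff n j hj x j le_rfl, Nat.sub_self, esym_zero, mul_one]
  have : j + (n - j) = n := by omega
  rw [this]
  exact_mod_cast (Nat.choose_pos (n := n) (k := n - j) (by omega)).ne'

lemma eval_pos_of_coeff_nonneg (p : Polynomial ℝ) (h0 : 0 < p.coeff 0)
    (h : ∀ i, 0 ≤ p.coeff i) (t : ℝ) (ht : 0 ≤ t) : 0 < p.eval t := by
  rw [eval_eq_sum_range]
  refine Finset.sum_pos' (fun i _ => mul_nonneg (h i) (pow_nonneg ht i)) ⟨0, ?_, ?_⟩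
  · simp [Nat.succ_pos]
  · simpa using h0

lemma taylor_Pe (n : ℕ) (x : Fin n → ℝ) (t : ℝ) :
    taylor t (Pe n x) = Pe n (fun i => x i + t) := by
  unfold Pe
  rw [taylor_apply, Polynomial.prod_comp]
  refine Finset.prod_congr rfl fun i _ => ?_
  rw [add_comp, X_comp, C_comp, add_assoc, ← C_add, add_comm t]

lemma esym_shift (n j : ℕ) (hj : j ≤ n) (x : Fin n → ℝ) (t : ℝ) :
    esym n j (fun i => x i + t) = (qp n j x).eval t := by
  rw [qp, ← taylor_coeff, taylor_Pe, Pe_coeff n j hj]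

lemma qp_coeff_nonneg (n j : ℕ) (hj : j ≤ n) (x : Fin n → ℝ)
    (h : ∀ k, 1 ≤ k → k ≤ j → 0 ≤ esym n k x) : ∀ i, 0 ≤ (qp n j x).coeff i := by
  intro i
  rcases le_or_gt i j with hi | hi
  · rw [qp_coeff n j hj x i hi]
    refine mul_nonneg (by positivity) ?_
    rcases Nat.eq_zero_or_pos (j - i) with h0 | h0
    · rw [h0, esym_zero]; norm_num
    · exact h _ h0 (by omega)
  · rw [qp_coeff_hi n j hj x i hi]

lemma qp_coeff_zero (n j : ℕ) (hj : j ≤ n) (x : Fin n → ℝ) :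
    (qp n j x).coeff 0 = esym n j x := by
  rw [qp_coeff n j hj x 0 (by omega)]
  simp

lemma esym_shift_pos (n j : ℕ) (hj1 : 1 ≤ j) (hj : j ≤ n) (x : Fin n → ℝ) (t : ℝ) (ht : 0 ≤ t)
    (h : ∀ k, 1 ≤ k → k ≤ j → 0 < esym n k x) : 0 < esym n j (fun i => x i + t) := by
  rw [esym_shift n j hj]
  refine eval_pos_of_coeff_nonneg _ ?_ (qp_coeff_nonneg n j hj x fun k h1 h2 => (h k h1 h2).le) t ht
  rw [qp_coeff_zero n j hj]
  exact h j hj1 le_rfl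

lemma card_roots_iter (p : Polynomial ℝ) (k : ℕ) :
    Multiset.card p.roots ≤ Multiset.card ((Polynomial.derivative (R := ℝ))^[k] p).roots + k := by
  induction k with
  | zero => simp
  | succ k ih =>
    refine ih.trans ?_
    rw [Function.iterate_succ_apply']
    have := Polynomial.card_roots_le_derivative ((Polynomial.derivative (R := ℝ))^[k] p)
    omega

lemma qp_roots_card (n j : ℕ) (hj : j ≤ n) (x : Fin n → ℝ) :
    Multiset.card (qp n j x).roots = j := by
  have h1 : (Polynomial.derivative (R := ℝ))^[n - j] (Pe n x) = ((n - j).factorial : ℝ) • qp n j x := by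
    rw [← Polynomial.factorial_smul_hasseDeriv (n - j)]
    simp only [Pi.smul_apply, LinearMap.smul_apply]
    rw [← Nat.cast_smul_eq_nsmul ℝ]
    rfl
  have hfac : ((n - j).factorial : ℝ) ≠ 0 := by exact_mod_cast (Nat.factorial_pos _).ne'
  have h3 := card_roots_iter (Pe n x) (n - j)
  rw [Pe_roots_card, h1] at h3
  have h4 : Multiset.card (((n - j).factorial : ℝ) • qp n j x).roots = Multiset.card (qp n j x).roots := by
    rw [Polynomial.roots_smul_nonzero _ hfac]
  rw [h4] at h3
  have h5 : Multiset.card (qp n j x).roots ≤ j := by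
    have h6 := Polynomial.card_roots' (qp n j x)
    rwa [qp_natDegree n j hj x] at h6
  omega

lemma qp_splits (n j : ℕ) (hj : j ≤ n) (x : Fin n → ℝ) :
    Splits (qp n j x) := by
  rw [splits_iff_card_roots, qp_roots_card n j hj, qp_natDegree n j hj]

lemma multiset_prod_pos (s : Multiset ℝ) (h : ∀ a ∈ s, 0 < a) : 0 < s.prod := by
  induction s using Multiset.induction with
  | empty => simp
  | cons a s ih =>
    rw [Multiset.prod_cons]
    exact mul_pos (h a (Multiset.mem_cons_self a s)) (ih fun b hb => h b (Multiset.mem_cons_of_mem hb))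

lemma multiset_sum_pos (s : Multiset ℝ) (h : ∀ a ∈ s, 0 < a) (hs : s ≠ 0) : 0 < s.sum := by
  induction s using Multiset.induction with
  | empty => exact absurd rfl hs
  | cons a s ih =>
    rw [Multiset.sum_cons]
    have ha := h a (Multiset.mem_cons_self a s)
    rcases eq_or_ne s 0 with h0 | h0
    · subst h0; simpa using ha
    · have := ih (fun b hb => h b (Multiset.mem_cons_of_mem hb)) h0
      linarith

lemma esym_eq_zero_of (n s : ℕ) (hs : s ≤ n) (x : Fin n → ℝ)
    (hnn : ∀ k, 1 ≤ k → k ≤ s → 0 ≤ esym n k x)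
    (j : ℕ) (hj1 : 1 ≤ j) (hjs : j ≤ s) (hj0 : esym n j x = 0) : esym n s x = 0 := by
  by_contra hne
  have hs1 : 1 ≤ s := le_trans hj1 hjs
  have hspos : 0 < esym n s x := (hnn s hs1 le_rfl).lt_of_ne (Ne.symm hne)
  have hc0 : (qp n s x).coeff 0 = esym n s x := qp_coeff_zero n s hs x
  have hcnn : ∀ i, 0 ≤ (qp n s x).coeff i := qp_coeff_nonneg n s hs x fun k h1 h2 => hnn k h1 h2
  have hq0 : qp n s x ≠ 0 := by
    intro h
    rw [h] at hc0
    simp at hc0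
    exact hne hc0.symm
  -- all roots are negative
  have hneg : ∀ μ ∈ (qp n s x).roots, μ < 0 := by
    intro μ hμ
    by_contra hge
    push_neg at hge
    have hroot := ((mem_roots hq0).mp hμ)
    have := eval_pos_of_coeff_nonneg (qp n s x) (hc0 ▸ hspos) hcnn μ hge
    rw [hroot.eq_zero] at this
    exact lt_irrefl 0 this
  have hfact := (qp_splits n s hs x).eq_prod_roots
  have hlc : 0 < (qp n s x).leadingCoeff := by
    rw [Polynomial.leadingCoeff, qp_natDegree n s hs x, qp_coeff n s hs x s le_rfl,
      Nat.sub_self, esym_zero, mul_one]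
    exact_mod_cast Nat.choose_pos (by omega)
  set ν : Multiset ℝ := (qp n s x).roots.map (fun a => -a) with hν
  have hνcard : Multiset.card ν = s := by
    rw [hν, Multiset.card_map, qp_roots_card n s hs x]
  have hνpos : ∀ a ∈ ν, 0 < a := by
    intro a ha
    rw [hν, Multiset.mem_map] at ha
    obtain ⟨μ, hμ, rfl⟩ := ha
    simpa using hneg μ hμ
  have hprodeq : ((qp n s x).roots.map fun a => X - C a) = ν.map (fun a => X + C a) := by
    rw [hν, Multiset.map_map]
    apply Multiset.map_congr rfl
    intro a _
    simp [sub_eq_add_neg]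
  -- coefficient s - j two ways
  have hkle : s - j ≤ Multiset.card ν := by omega
  have hco := Multiset.prod_X_add_C_coeff ν hkle
  have hsub : Multiset.card ν - (s - j) = j := by omega
  rw [hsub] at hco
  have hesympos : 0 < ν.esymm j := by
    rw [Multiset.esymm]
    apply multiset_sum_pos
    · intro b hb
      rw [Multiset.mem_map] at hb
      obtain ⟨t, ht, rfl⟩ := hb
      rw [Multiset.mem_powersetCard] at ht
      exact multiset_prod_pos t fun a ha => hνpos a (Multiset.mem_of_le ht.1 ha)
    · intro h0
      have := Multiset.card_powersetCard j ν
      rw [hνcard] at this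
      have hpos := Nat.choose_pos hjs
      rw [Multiset.map_eq_zero] at h0
      rw [h0] at this
      simp at this
      omega
  have hzero : (qp n s x).coeff (s - j) = 0 := by
    rw [qp_coeff n s hs x (s - j) (by omega)]
    have : s - (s - j) = j := by omega
    rw [this, hj0, mul_zero]
  have hcoeff2 : (qp n s x).coeff (s - j) =
      (qp n s x).leadingCoeff * ν.esymm j := by
    conv_lhs => rw [hfact]
    rw [coeff_C_mul, hprodeq, hco]
  rw [hzero] at hcoeff2
  have : 0 < (qp n s x).leadingCoeff * ν.esymm j := mul_pos hlc hesympos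
  rw [← hcoeff2] at this
  exact lt_irrefl 0 this

lemma esym_continuous (n k : ℕ) : Continuous (esym n k) :=
  continuous_finset_sum _ fun _ _ => continuous_finset_prod _ fun i _ => continuous_apply i

lemma esym_one_pos (n k : ℕ) (hk : k ≤ n) : 0 < esym n k (fun _ => (1 : ℝ)) := by
  rw [esym_one n k hk]
  exact_mod_cast Nat.choose_pos hk

lemma segment_pos (n r : ℕ) (hr1 : 1 ≤ r) (hrn : r ≤ n) (x : Fin n → ℝ)
    (hx : ∀ k, 1 ≤ k → k ≤ r → 0 < esym n k x)
    (y : Fin n → ℝ) (hy : y ∈ segment ℝ x (fun _ => (1 : ℝ))) :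
    ∀ k, 1 ≤ k → k ≤ r → 0 < esym n k y := by
  obtain ⟨a, b, ha, hb, hab, rfl⟩ := hy
  intro k hk1 hkr
  rcases eq_or_lt_of_le ha with h0 | h0
  · have hb1 : b = 1 := by linarith
    have : (a • x + b • fun _ => (1 : ℝ)) = fun _ => (1 : ℝ) := by
      funext i
      simp [← h0, hb1]
    rw [this]
    exact esym_one_pos n k (le_trans hkr hrn)
  · have hxy : (a • x + b • fun _ => (1 : ℝ)) = fun i => a * (x i + b / a) := by
      funext i
      simp only [Pi.add_apply, Pi.smul_apply, smul_eq_mul, mul_one]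
      field_simp
    rw [hxy, esym_smul]
    refine mul_pos (pow_pos h0 k) ?_
    exact esym_shift_pos n k hk1 (le_trans hkr hrn) x (b / a) (div_nonneg hb h0.le)
      fun m h1 h2 => hx m h1 (le_trans h2 hkr)

/-- The Gårding cone `Γ_r`: the connected component of `{x : σ_r(x) ≠ 0}` containing
the vector `(1, ..., 1)`. -/
def GardingCone (n r : ℕ) : Set (Fin n → ℝ) :=
  connectedComponentIn {x : Fin n → ℝ | esym n r x ≠ 0} (fun _ => (1 : ℝ))

/-- The Gårding cones are nested decreasingly: `Γ_1 ⊃ Γ_2 ⊃ ... ⊃ Γ_n`. -/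
theorem gardingCone_nested (n r s : ℕ) (hr : 1 ≤ r) (hrs : r ≤ s) (hsn : s ≤ n) :
    GardingCone n s ⊆ GardingCone n r := by
  have hs1 : 1 ≤ s := le_trans hr hrs
  have hrn : r ≤ n := le_trans hrs hsn
  set e : Fin n → ℝ := fun _ => (1 : ℝ) with he
  -- Step 1: GardingCone n s ⊆ {y | ∀ k ∈ [1,s], 0 < esym n k y}
  set U : Set (Fin n → ℝ) := ⋂ k ∈ Finset.Icc 1 s, {y | 0 < esym n k y} with hU
  set V : Set (Fin n → ℝ) := ⋃ k ∈ Finset.Icc 1 s, {y | esym n k y < 0} with hV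
  have hUopen : IsOpen U := isOpen_biInter_finset fun k _ =>
    isOpen_lt continuous_const (esym_continuous n k)
  have hVopen : IsOpen V := isOpen_biUnion fun k _ =>
    isOpen_lt (esym_continuous n k) continuous_const
  have hGsub : GardingCone n s ⊆ {x | esym n s x ≠ 0} :=
    connectedComponentIn_subset _ _
  have hcover : GardingCone n s ⊆ U ∪ V := by
    intro y hy
    by_cases hv : ∃ k, 1 ≤ k ∧ k ≤ s ∧ esym n k y < 0
    · obtain ⟨k, h1, h2, h3⟩ := hv
      exact Or.inr (Set.mem_iUnion₂.mpr ⟨k, Finset.mem_Icc.mpr ⟨h1, h2⟩, h3⟩)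
    · push_neg at hv
      have hnn : ∀ k, 1 ≤ k → k ≤ s → 0 ≤ esym n k y := hv
      by_cases hu : ∀ k, 1 ≤ k → k ≤ s → 0 < esym n k y
      · exact Or.inl (Set.mem_iInter₂.mpr fun k hk => by
          rw [Finset.mem_Icc] at hk
          exact hu k hk.1 hk.2)
      · push_neg at hu
        obtain ⟨k, h1, h2, h3⟩ := hu
        have hzero : esym n k y = 0 := le_antisymm h3 (hnn k h1 h2)
        have := esym_eq_zero_of n s hsn y hnn k h1 h2 hzero
        exact absurd this (hGsub hy)
  have hdisj : GardingCone n s ∩ (U ∩ V) = ∅ := by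
    ext y
    simp only [Set.mem_inter_iff, Set.mem_empty_iff_false, iff_false, not_and]
    intro _ hyU hyV
    rw [hV, Set.mem_iUnion₂] at hyV
    obtain ⟨k, hk, hlt⟩ := hyV
    rw [hU, Set.mem_iInter₂] at hyU
    have h2 := hyU k hk
    simp only [Set.mem_setOf_eq] at h2 hlt
    linarith
  have heU : e ∈ U := Set.mem_iInter₂.mpr fun k hk => by
    rw [Finset.mem_Icc] at hk
    exact esym_one_pos n k (le_trans hk.2 hsn)
  have heG : e ∈ GardingCone n s :=
    mem_connectedComponentIn (by
      simp only [Set.mem_setOf_eq]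
      exact (esym_one_pos n s hsn).ne')
  have hGU : GardingCone n s ⊆ U := by
    intro y hy
    rcases hcover hy with h | h
    · exact h
    · exfalso
      have hpre : IsPreconnected (GardingCone n s) := isPreconnected_connectedComponentIn
      have := hpre U V hUopen hVopen hcover ⟨e, heG, heU⟩ ⟨y, hy, h⟩
      obtain ⟨z, hz⟩ := this
      have : z ∈ GardingCone n s ∩ (U ∩ V) := ⟨hz.1, hz.2⟩
      rw [hdisj] at this
      exact this
  -- Step 2: use segments to land in GardingCone n r
  intro x hx
  have hxU := hGU hx
  rw [hU, Set.mem_iInter₂] at hxU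
  have hxpos : ∀ k, 1 ≤ k → k ≤ r → 0 < esym n k x := fun k h1 h2 =>
    hxU k (Finset.mem_Icc.mpr ⟨h1, le_trans h2 hrs⟩)
  have hseg : segment ℝ x e ⊆ {y : Fin n → ℝ | esym n r y ≠ 0} := by
    intro y hy
    exact (segment_pos n r hr hrn x hxpos y hy r hr le_rfl).ne'
  have hconn : IsPreconnected (segment ℝ x e) := (convex_segment x e).isPreconnected
  have := hconn.subset_connectedComponentIn (right_mem_segment ℝ x e) hseg
  exact this (left_mem_segment ℝ x e)
end

section
/- Let λ_1,...,λ_n > 0 and let σ_r be the r-th elementary symmetric polynomial, 2 ≤ r ≤ n. Then for any real numbers (y_1,...,y_n): σ_r(λ) ∑_{i,j} y_i y_j ∂²σ_r/∂x_i∂x_j(λ) ≤ ((r−1)/r) (∑_j y_j ∂σ_r/∂x_j(λ))². -/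
open Finset

set_option maxHeartbeats 1000000
set_option linter.unnecessarySeqFocus false

/-- Partial derivative `∂f/∂x_i` at `x`. -/
noncomputable def pd {n : ℕ} (f : (Fin n → ℝ) → ℝ) (i : Fin n) (x : Fin n → ℝ) : ℝ :=
  deriv (fun t => f (Function.update x i t)) (x i)

open Polynomial

lemma multiset_sum_im (m : Multiset ℂ) : m.sum.im = (m.map Complex.im).sum := by
  induction m using Multiset.induction_on with
  | empty => simp
  | cons a s ih => simp [ih]

lemma multiset_sum_neg (m : Multiset ℝ) (h : ∀ x ∈ m, x < 0) (hm : m ≠ 0) : m.sum < 0 := by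
  induction m using Multiset.induction_on with
  | empty => exact absurd rfl hm
  | cons a s ih =>
    rcases eq_or_ne s 0 with rfl | hs
    · simpa using h a (by simp)
    · have := ih (fun x hx => h x (by simp [hx])) hs
      have ha := h a (by simp)
      simp only [Multiset.sum_cons]
      linarith

lemma step_lemma (q : Polynomial ℂ) (hdeg : 1 ≤ q.natDegree)
    (hq : ∀ w : ℂ, 0 ≤ w.im → q.eval w ≠ 0) :
    ∀ w : ℂ, 0 ≤ w.im → (Polynomial.derivative q).eval w ≠ 0 := by
  classical
  have hq0 : q ≠ 0 := fun h => hq Complex.I (by simp) (by simp [h])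
  have hcard : q.roots.card = q.natDegree :=
    (Polynomial.splits_iff_card_roots).mp (IsAlgClosed.splits q)
  have hfac := Polynomial.C_leadingCoeff_mul_prod_multiset_X_sub_C hcard
  have hroots : ∀ ρ ∈ q.roots, ρ.im < 0 := by
    intro ρ hρ
    have hev : q.eval ρ = 0 := (Polynomial.mem_roots hq0).mp hρ
    by_contra h
    push_neg at h
    exact hq ρ h hev
  intro w hw
  have hfac' : ∀ ρ ∈ q.roots, w - ρ ≠ 0 := by
    intro ρ hρ h0
    have := hroots ρ hρ
    have : (w - ρ).im > 0 := by simp [Complex.sub_im]; linarith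
    rw [h0] at this; simp at this
  have hd : (Polynomial.derivative q).eval w =
      q.leadingCoeff *
        ((q.roots.map fun ρ => ((q.roots.erase ρ).map fun τ => w - τ).prod)).sum := by
    conv_lhs => rw [← hfac]
    rw [derivative_mul, derivative_C, zero_mul, zero_add, Polynomial.derivative_prod]
    rw [eval_mul, eval_C]
    congr 1
    rw [show eval w (Multiset.map (fun i => (Multiset.map (fun a => X - C a) (q.roots.erase i)).prod * derivative (X - C i)) q.roots).sum = (Polynomial.evalRingHom w) (Multiset.map (fun i => (Multiset.map (fun a => X - C a) (q.roots.erase i)).prod * derivative (X - C i)) q.roots).sum from rfl,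
      map_multiset_sum (Polynomial.evalRingHom w), Multiset.map_map]
    congr 1
    refine Multiset.map_congr rfl fun ρ hρ => ?_
    simp only [Function.comp_apply, derivative_sub, derivative_X, derivative_C, sub_zero, mul_one,
      map_multiset_prod, Multiset.map_map]
    congr 1
    refine Multiset.map_congr rfl fun τ hτ => ?_
    simp
  have hPi : ((q.roots.map fun τ => w - τ)).prod ≠ 0 := by
    rw [Ne, Multiset.prod_eq_zero_iff]
    intro h0
    obtain ⟨τ, hτ, h0⟩ := Multiset.mem_map.mp h0
    exact hfac' τ hτ h0
  have hterm : ∀ ρ ∈ q.roots,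
      ((q.roots.erase ρ).map fun τ => w - τ).prod =
        ((q.roots.map fun τ => w - τ)).prod * (w - ρ)⁻¹ := by
    intro ρ hρ
    have := Multiset.prod_map_erase (f := fun τ => w - τ) hρ
    rw [eq_comm, mul_inv_eq_iff_eq_mul₀ (hfac' ρ hρ), ← this]
    ring
  have hsum : ((q.roots.map fun ρ => ((q.roots.erase ρ).map fun τ => w - τ).prod)).sum =
      ((q.roots.map fun τ => w - τ)).prod * ((q.roots.map fun ρ => (w - ρ)⁻¹)).sum := by
    rw [Multiset.map_congr rfl hterm, Multiset.sum_map_mul_left]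
  have hinv : ((q.roots.map fun ρ => (w - ρ)⁻¹)).sum ≠ 0 := by
    intro h0
    have him : ((q.roots.map fun ρ => (w - ρ)⁻¹)).sum.im < 0 := by
      rw [multiset_sum_im, Multiset.map_map]
      apply multiset_sum_neg
      · intro x hx
        obtain ⟨ρ, hρ, rfl⟩ := Multiset.mem_map.mp hx
        simp only [Function.comp_apply, Complex.inv_im, Complex.sub_im]
        apply div_neg_of_neg_of_pos
        · have := hroots ρ hρ; linarith
        · exact Complex.normSq_pos.mpr (hfac' ρ hρ)
      · simp only [ne_eq, Multiset.map_eq_zero, Multiset.map_eq_zero]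
        intro h0'
        rw [h0'] at hcard
        simp at hcard
        omega
    rw [h0] at him
    simp at him
  rw [hd, hsum]
  exact mul_ne_zero (leadingCoeff_ne_zero.mpr hq0) (mul_ne_zero hPi hinv)

lemma esym_stable (n r : ℕ) (hr : 1 ≤ r) (hrn : r ≤ n) (z : Fin n → ℂ)
    (hz : ∀ i, 0 < (z i).im) :
    ∑ s ∈ (Finset.univ : Finset (Fin n)).powersetCard r, ∏ i ∈ s, z i ≠ 0 := by
  classical
  set h : Polynomial ℂ := ∏ i : Fin n, (X + C (z i)) with hh
  have hmonic : h.Monic := monic_prod_of_monic _ _ fun i _ => monic_X_add_C (z i)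
  have hdeg : h.natDegree = n := by
    rw [hh, natDegree_prod _ _ fun i _ => (monic_X_add_C (z i)).ne_zero]
    simp [natDegree_X_add_C]
  have hiterdeg : ∀ k, k ≤ n → (derivative^[k] h).natDegree = n - k := by
    intro k hk
    refine le_antisymm (by simpa [hdeg] using natDegree_iterate_derivative h k) ?_
    apply le_natDegree_of_ne_zero
    rw [coeff_iterate_derivative, Nat.sub_add_cancel hk]
    have h1 : h.coeff n = 1 := by rw [← hdeg]; exact hmonic.coeff_natDegree
    rw [h1, nsmul_eq_mul, mul_one, Nat.cast_ne_zero]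
    simp only [ne_eq, Nat.descFactorial_eq_zero_iff_lt]
    omega
  have hinv : ∀ k, k ≤ n - r → ∀ w : ℂ, 0 ≤ w.im → (derivative^[k] h).eval w ≠ 0 := by
    intro k
    induction k with
    | zero =>
      intro _ w hw
      simp only [Function.iterate_zero, id_eq]
      rw [hh, eval_prod]
      refine Finset.prod_ne_zero_iff.mpr fun i _ => fun h0 => ?_
      simp only [eval_add, eval_X, eval_C] at h0
      have : (w + z i).im > 0 := by
        simp only [Complex.add_im]
        have := hz i; linarith
      rw [h0] at this; simp at this
    | succ k ih =>
      intro hk w hw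
      rw [Function.iterate_succ_apply']
      refine step_lemma _ ?_ (ih (by omega)) w hw
      rw [hiterdeg k (by omega)]
      omega
  have hfin := hinv (n - r) le_rfl 0 (by simp)
  rw [← coeff_zero_eq_eval_zero, coeff_iterate_derivative, zero_add] at hfin
  have hcoeff : h.coeff (n - r) =
      ∑ s ∈ (Finset.univ : Finset (Fin n)).powersetCard r, ∏ i ∈ s, z i := by
    rw [hh, Finset.prod_X_add_C_coeff _ _ (by simp [hrn])]
    congr 1
    simp [Nat.sub_sub_self hrn]
  rw [hcoeff] at hfin
  intro h0
  rw [h0] at hfin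
  simp at hfin

lemma deriv_affine (A B t : ℝ) : deriv (fun u : ℝ => A * u + B) t = A := by
  have h : HasDerivAt (fun u : ℝ => A * u + B) (A * 1) t :=
    ((hasDerivAt_id t).const_mul A).add_const B
  simpa using h.deriv

lemma pd_esym (n r : ℕ) (j : Fin n) (x : Fin n → ℝ) :
    pd (esym n r) j x =
      ∑ s ∈ ((Finset.univ : Finset (Fin n)).powersetCard r).filter (fun s => j ∈ s),
        ∏ i ∈ s.erase j, x i := by
  classical
  have hfun : ∀ t, esym n r (Function.update x j t) =
      (∑ s ∈ ((Finset.univ : Finset (Fin n)).powersetCard r).filter (fun s => j ∈ s),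
        ∏ i ∈ s.erase j, x i) * t +
      ∑ s ∈ ((Finset.univ : Finset (Fin n)).powersetCard r).filter (fun s => ¬ j ∈ s),
        ∏ i ∈ s, x i := by
    intro t
    rw [esym, ← Finset.sum_filter_add_sum_filter_not _ (fun s => j ∈ s), Finset.sum_mul]
    congr 1
    · refine Finset.sum_congr rfl fun s hs => ?_
      have hj : j ∈ s := (Finset.mem_filter.mp hs).2
      rw [← Finset.mul_prod_erase _ _ hj, Function.update_self, mul_comm]
      congr 1
      exact Finset.prod_congr rfl fun i hi =>
        Function.update_of_ne (Finset.ne_of_mem_erase hi) _ _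
    · refine Finset.sum_congr rfl fun s hs => ?_
      have hj : j ∉ s := (Finset.mem_filter.mp hs).2
      refine Finset.prod_congr rfl fun i hi => ?_
      have : i ≠ j := by rintro rfl; exact hj hi
      exact Function.update_of_ne this _ _
  rw [pd, funext hfun, deriv_affine]

lemma pd_pd_esym_diag (n r : ℕ) (j : Fin n) (x : Fin n → ℝ) :
    pd (pd (esym n r) j) j x = 0 := by
  classical
  have hf : pd (esym n r) j = fun x =>
      ∑ s ∈ ((Finset.univ : Finset (Fin n)).powersetCard r).filter (fun s => j ∈ s),
        ∏ i ∈ s.erase j, x i := funext (pd_esym n r j)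
  rw [pd, hf]
  have heq : (fun t => ∑ s ∈ ((Finset.univ : Finset (Fin n)).powersetCard r).filter
        (fun s => j ∈ s), ∏ i ∈ s.erase j, (Function.update x j t) i) =
      fun _ => ∑ s ∈ ((Finset.univ : Finset (Fin n)).powersetCard r).filter (fun s => j ∈ s),
        ∏ i ∈ s.erase j, x i := by
    funext t
    exact Finset.sum_congr rfl fun s _ => Finset.prod_congr rfl fun i hi =>
      Function.update_of_ne (Finset.ne_of_mem_erase hi) _ _
  rw [heq, deriv_const]

lemma pd_pd_esym_ne (n r : ℕ) {i j : Fin n} (hij : i ≠ j) (x : Fin n → ℝ) :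
    pd (pd (esym n r) j) i x =
      ∑ s ∈ ((Finset.univ : Finset (Fin n)).powersetCard r).filter
          (fun s => j ∈ s ∧ i ∈ s),
        ∏ k ∈ (s.erase j).erase i, x k := by
  classical
  have hf : pd (esym n r) j = fun x =>
      ∑ s ∈ ((Finset.univ : Finset (Fin n)).powersetCard r).filter (fun s => j ∈ s),
        ∏ i ∈ s.erase j, x i := funext (pd_esym n r j)
  rw [pd, hf]
  have hfun : ∀ t, (∑ s ∈ ((Finset.univ : Finset (Fin n)).powersetCard r).filter
        (fun s => j ∈ s), ∏ k ∈ s.erase j, (Function.update x i t) k) =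
      (∑ s ∈ ((Finset.univ : Finset (Fin n)).powersetCard r).filter
          (fun s => j ∈ s ∧ i ∈ s), ∏ k ∈ (s.erase j).erase i, x k) * t +
      ∑ s ∈ ((Finset.univ : Finset (Fin n)).powersetCard r).filter
          (fun s => (j ∈ s) ∧ ¬ i ∈ s), ∏ k ∈ s.erase j, x k := by
    intro t
    rw [← Finset.sum_filter_add_sum_filter_not
        (((Finset.univ : Finset (Fin n)).powersetCard r).filter (fun s => j ∈ s))
        (fun s => i ∈ s), Finset.sum_mul, Finset.filter_filter, Finset.filter_filter]
    congr 1
    · refine Finset.sum_congr rfl fun s hs => ?_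
      have hi : i ∈ s := (Finset.mem_filter.mp hs).2.2
      have hie : i ∈ s.erase j := Finset.mem_erase.mpr ⟨hij, hi⟩
      rw [← Finset.mul_prod_erase _ _ hie, Function.update_self, mul_comm]
      congr 1
      exact Finset.prod_congr rfl fun k hk =>
        Function.update_of_ne (Finset.ne_of_mem_erase hk) _ _
    · refine Finset.sum_congr rfl fun s hs => ?_
      have hi : i ∉ s := (Finset.mem_filter.mp hs).2.2
      refine Finset.prod_congr rfl fun k hk => ?_
      have : k ≠ i := by rintro rfl; exact hi (Finset.mem_of_mem_erase hk)
      exact Function.update_of_ne this _ _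
  rw [funext hfun, deriv_affine]

noncomputable def Pq (n r : ℕ) (lam y : Fin n → ℝ) : Polynomial ℝ :=
  ∑ s ∈ (Finset.univ : Finset (Fin n)).powersetCard r,
    Polynomial.C (∏ i ∈ s, lam i) * ∏ i ∈ s, (Polynomial.X + Polynomial.C (y i / lam i))

lemma Pq_coeff (n r k : ℕ) (hk : k ≤ r) (lam y : Fin n → ℝ) :
    (Pq n r lam y).coeff k =
      ∑ s ∈ (Finset.univ : Finset (Fin n)).powersetCard r, (∏ i ∈ s, lam i) *
        ∑ t ∈ s.powersetCard (r - k), ∏ i ∈ t, (y i / lam i) := by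
  rw [Pq, Polynomial.finset_sum_coeff]
  refine Finset.sum_congr rfl fun s hs => ?_
  have hcard : s.card = r := (Finset.mem_powersetCard.mp hs).2
  rw [Polynomial.coeff_C_mul, Finset.prod_X_add_C_coeff _ _ (le_of_le_of_eq hk hcard.symm), hcard]

lemma Pq_natDegree_le (n r : ℕ) (lam y : Fin n → ℝ) : (Pq n r lam y).natDegree ≤ r := by
  refine (Polynomial.natDegree_sum_le _ _).trans ?_
  rw [Finset.fold_max_le]
  refine ⟨Nat.zero_le r, fun s hs => ?_⟩
  refine (Polynomial.natDegree_C_mul_le _ _).trans ?_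
  have : (∏ i ∈ s, (Polynomial.X + Polynomial.C (y i / lam i))).natDegree
      = ∑ i ∈ s, (Polynomial.X + Polynomial.C (y i / lam i)).natDegree :=
    Polynomial.natDegree_prod _ _ fun i _ => (Polynomial.monic_X_add_C _).ne_zero
  rw [this]
  simp only [Polynomial.natDegree_X_add_C]
  simp [(Finset.mem_powersetCard.mp hs).2]

lemma Pq_coeff_top (n r : ℕ) (lam y : Fin n → ℝ) :
    (Pq n r lam y).coeff r = esym n r lam := by
  rw [Pq_coeff n r r le_rfl, esym]
  refine Finset.sum_congr rfl fun s hs => ?_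
  simp

lemma Pq_coeff_r1 (n r : ℕ) (hr : 1 ≤ r) (lam y : Fin n → ℝ) (hlam : ∀ i, lam i ≠ 0) :
    (Pq n r lam y).coeff (r - 1) = ∑ j, y j * pd (esym n r) j lam := by
  classical
  rw [Pq_coeff n r (r-1) (by omega) lam y]
  have h1 : r - (r - 1) = 1 := by omega
  rw [h1]
  simp only [pd_esym, Finset.mul_sum, Finset.sum_filter, mul_ite, mul_zero]
  rw [Finset.sum_comm]
  refine Finset.sum_congr rfl fun s hs => ?_
  rw [Finset.powersetCard_one, Finset.sum_map]
  rw [← Finset.sum_filter, Finset.filter_univ_mem]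
  refine Finset.sum_congr rfl fun j hj => ?_
  simp only [Function.Embedding.coeFn_mk, Finset.prod_singleton]
  rw [← Finset.mul_prod_erase _ _ hj]
  field_simp [hlam j]

lemma offDiag_pair {α : Type*} [DecidableEq α] {a b : α} (hab : a ≠ b) :
    ({a, b} : Finset α).offDiag = {(a, b), (b, a)} := by
  ext p
  simp only [Finset.mem_offDiag, Finset.mem_insert, Finset.mem_singleton, Prod.ext_iff]
  constructor
  · rintro ⟨h1 | h1, h2 | h2, h3⟩ <;> simp_all
  · rintro (⟨rfl, rfl⟩ | ⟨rfl, rfl⟩) <;> simp_all <;> exact fun h => hab h.symm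

lemma offDiag_biUnion' {α : Type*} [DecidableEq α] (s : Finset α) :
    s.offDiag = (s.powersetCard 2).biUnion (fun u => u.offDiag) := by
  ext p
  simp only [Finset.mem_offDiag, Finset.mem_biUnion, Finset.mem_powersetCard]
  constructor
  · rintro ⟨h1, h2, h3⟩
    exact ⟨{p.1, p.2},
      ⟨Finset.insert_subset h1 (Finset.singleton_subset_iff.mpr h2), Finset.card_pair h3⟩,
      by simp, by simp, h3⟩
  · rintro ⟨u, ⟨hsub, _⟩, h1, h2, h3⟩
    exact ⟨hsub h1, hsub h2, h3⟩

lemma pairwiseDisjoint_offDiag' {α : Type*} [DecidableEq α] (s : Finset α) :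
    ((s.powersetCard 2 : Finset (Finset α)) : Set (Finset α)).PairwiseDisjoint
      Finset.offDiag := by
  intro u hu v hv huv
  simp only [Function.onFun]
  rw [Finset.disjoint_left]
  intro p hpu hpv
  apply huv
  have hu2 : u.card = 2 := (Finset.mem_powersetCard.mp (Finset.mem_coe.mp hu)).2
  have hv2 : v.card = 2 := (Finset.mem_powersetCard.mp (Finset.mem_coe.mp hv)).2
  obtain ⟨hu1, hu2', hune⟩ := Finset.mem_offDiag.mp hpu
  obtain ⟨hv1, hv2', _⟩ := Finset.mem_offDiag.mp hpv
  have h1 : ({p.1, p.2} : Finset α) ⊆ u :=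
    Finset.insert_subset hu1 (Finset.singleton_subset_iff.mpr hu2')
  have h2 : ({p.1, p.2} : Finset α) ⊆ v :=
    Finset.insert_subset hv1 (Finset.singleton_subset_iff.mpr hv2')
  have e1 : ({p.1, p.2} : Finset α) = u :=
    Finset.eq_of_subset_of_card_le h1 (by rw [hu2, Finset.card_pair hune])
  have e2 : ({p.1, p.2} : Finset α) = v :=
    Finset.eq_of_subset_of_card_le h2 (by rw [hv2, Finset.card_pair hune])
  rw [← e1, ← e2]

lemma D2_eq (n r : ℕ) (hr : 2 ≤ r) (lam y : Fin n → ℝ) (hlam : ∀ i, lam i ≠ 0) :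
    ∑ i : Fin n, ∑ j : Fin n, y i * y j * pd (pd (esym n r) j) i lam =
      2 * (Pq n r lam y).coeff (r - 2) := by
  classical
  rw [Pq_coeff n r (r-2) (by omega) lam y]
  have h2 : r - (r - 2) = 2 := by omega
  rw [h2]
  -- step 1 : rewrite LHS as a triple sum with an if
  have step1 : ∑ i : Fin n, ∑ j : Fin n, y i * y j * pd (pd (esym n r) j) i lam =
      ∑ i : Fin n, ∑ j : Fin n, ∑ s ∈ (Finset.univ : Finset (Fin n)).powersetCard r,
        (if i ∈ s ∧ j ∈ s ∧ i ≠ j then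
          y i * y j * ∏ k ∈ (s.erase j).erase i, lam k else 0) := by
    refine Finset.sum_congr rfl fun i _ => Finset.sum_congr rfl fun j _ => ?_
    rcases eq_or_ne i j with rfl | hij
    · rw [pd_pd_esym_diag]
      simp
    · rw [pd_pd_esym_ne n r hij, Finset.mul_sum, Finset.sum_filter]
      refine Finset.sum_congr rfl fun s _ => ?_
      by_cases h : i ∈ s ∧ j ∈ s ∧ i ≠ j
      · rw [if_pos ⟨h.2.1, h.1⟩, if_pos h]
      · rw [if_neg, if_neg h]
        rintro ⟨hjs, his⟩
        exact h ⟨his, hjs, hij⟩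
  rw [step1]
  have swap : ∑ i : Fin n, ∑ j : Fin n, ∑ s ∈ (Finset.univ : Finset (Fin n)).powersetCard r,
        (if i ∈ s ∧ j ∈ s ∧ i ≠ j then
          y i * y j * ∏ k ∈ (s.erase j).erase i, lam k else 0) =
      ∑ s ∈ (Finset.univ : Finset (Fin n)).powersetCard r, ∑ j : Fin n, ∑ i : Fin n,
        (if i ∈ s ∧ j ∈ s ∧ i ≠ j then
          y i * y j * ∏ k ∈ (s.erase j).erase i, lam k else 0) := by
    calc ∑ i : Fin n, ∑ j : Fin n, ∑ s ∈ (Finset.univ : Finset (Fin n)).powersetCard r,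
        (if i ∈ s ∧ j ∈ s ∧ i ≠ j then
          y i * y j * ∏ k ∈ (s.erase j).erase i, lam k else 0)
        = ∑ i : Fin n, ∑ s ∈ (Finset.univ : Finset (Fin n)).powersetCard r, ∑ j : Fin n,
        (if i ∈ s ∧ j ∈ s ∧ i ≠ j then
          y i * y j * ∏ k ∈ (s.erase j).erase i, lam k else 0) :=
          Finset.sum_congr rfl fun i _ => Finset.sum_comm
      _ = ∑ s ∈ (Finset.univ : Finset (Fin n)).powersetCard r, ∑ i : Fin n, ∑ j : Fin n,
        (if i ∈ s ∧ j ∈ s ∧ i ≠ j then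
          y i * y j * ∏ k ∈ (s.erase j).erase i, lam k else 0) := Finset.sum_comm
      _ = ∑ s ∈ (Finset.univ : Finset (Fin n)).powersetCard r, ∑ j : Fin n, ∑ i : Fin n,
        (if i ∈ s ∧ j ∈ s ∧ i ≠ j then
          y i * y j * ∏ k ∈ (s.erase j).erase i, lam k else 0) :=
          Finset.sum_congr rfl fun s _ => Finset.sum_comm
  rw [swap, Finset.mul_sum]
  refine Finset.sum_congr rfl fun s hs => ?_
  -- step 3 : per s, sum over offDiag
  have hoff : s.offDiag = ((Finset.univ : Finset (Fin n)) ×ˢ (Finset.univ : Finset (Fin n))).filter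
      (fun p => p.1 ∈ s ∧ p.2 ∈ s ∧ p.1 ≠ p.2) := by
    ext p
    simp [Finset.mem_offDiag]
  have step3 : ∑ j : Fin n, ∑ i : Fin n,
      (if i ∈ s ∧ j ∈ s ∧ i ≠ j then
          y i * y j * ∏ k ∈ (s.erase j).erase i, lam k else 0) =
      ∑ p ∈ s.offDiag, y p.1 * y p.2 * ∏ k ∈ (s.erase p.2).erase p.1, lam k := by
    rw [hoff, Finset.sum_filter, ← Finset.sum_product']
    refine Finset.sum_equiv (Equiv.prodComm _ _) (by simp) (fun p _ => ?_)
    rfl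
  rw [step3]
  -- step 4 : collapse pairs
  rw [offDiag_biUnion' s, Finset.sum_biUnion (pairwiseDisjoint_offDiag' s)]
  rw [show (2:ℝ) * ((∏ i ∈ s, lam i) * ∑ t ∈ s.powersetCard 2, ∏ i ∈ t, (y i / lam i)) =
      ∑ t ∈ s.powersetCard 2, 2 * ((∏ i ∈ s, lam i) * ∏ i ∈ t, (y i / lam i)) by
    rw [Finset.mul_sum, Finset.mul_sum]]
  refine Finset.sum_congr rfl fun u hu => ?_
  obtain ⟨hus, hcard⟩ := Finset.mem_powersetCard.mp hu
  obtain ⟨a, b, hab, rfl⟩ := Finset.card_eq_two.mp hcard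
  have ha : a ∈ s := hus (by simp)
  have hb : b ∈ s := hus (by simp)
  rw [offDiag_pair hab, Finset.sum_pair (by simp [hab, Prod.ext_iff] : ((a, b) : Fin n × Fin n) ≠ (b, a))]
  have herase : ((s.erase a).erase b : Finset (Fin n)) = (s.erase b).erase a :=
    Finset.erase_right_comm
  have hbea : b ∈ s.erase a := Finset.mem_erase.mpr ⟨hab.symm, hb⟩
  have hprod : ∏ i ∈ s, lam i = lam a * (lam b * ∏ k ∈ (s.erase a).erase b, lam k) := by
    rw [Finset.mul_prod_erase _ _ hbea, Finset.mul_prod_erase _ _ ha]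
  rw [Finset.prod_pair hab, hprod]
  simp only [herase]
  have hla := hlam a
  have hlb := hlam b
  field_simp [hlam a, hlam b]
  ring

lemma esym_pos (n r : ℕ) (hrn : r ≤ n) (lam : Fin n → ℝ) (hpos : ∀ i, 0 < lam i) :
    0 < esym n r lam := by
  rw [esym]
  refine Finset.sum_pos (fun s _ => Finset.prod_pos fun i _ => hpos i) ?_
  exact Finset.powersetCard_nonempty.mpr (by simp [hrn])

lemma Pq_map_eval (n r : ℕ) (lam y : Fin n → ℝ) (hlam : ∀ i, lam i ≠ 0) (ρ : ℂ) :
    ((Pq n r lam y).map (algebraMap ℝ ℂ)).eval ρ =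
      ∑ s ∈ (Finset.univ : Finset (Fin n)).powersetCard r,
        ∏ i ∈ s, ((y i : ℂ) + (lam i : ℂ) * ρ) := by
  rw [Pq, Polynomial.eval_map, Polynomial.eval₂_finset_sum]
  refine Finset.sum_congr rfl fun s _ => ?_
  rw [Polynomial.eval₂_mul, Polynomial.eval₂_C, Polynomial.eval₂_finset_prod]
  have hc : (algebraMap ℝ ℂ) (∏ i ∈ s, lam i) = ∏ i ∈ s, ((lam i : ℝ) : ℂ) := by
    push_cast [map_prod]; rfl
  rw [hc, ← Finset.prod_mul_distrib]
  refine Finset.prod_congr rfl fun i _ => ?_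
  rw [Polynomial.eval₂_add, Polynomial.eval₂_X, Polynomial.eval₂_C]
  have : ((algebraMap ℝ ℂ) (y i / lam i)) = (y i : ℂ) / (lam i : ℂ) := by push_cast; rfl
  rw [this]
  have hli : (lam i : ℂ) ≠ 0 := by exact_mod_cast hlam i
  field_simp
  ring

lemma Pq_roots_im (n r : ℕ) (hr : 1 ≤ r) (hrn : r ≤ n) (lam y : Fin n → ℝ)
    (hpos : ∀ i, 0 < lam i) (ρ : ℂ)
    (hev : ((Pq n r lam y).map (algebraMap ℝ ℂ)).eval ρ = 0) : ρ.im = 0 := by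
  have hlam : ∀ i, lam i ≠ 0 := fun i => (hpos i).ne'
  rw [Pq_map_eval n r lam y hlam ρ] at hev
  by_contra him
  rcases lt_or_gt_of_ne him with hlt | hgt
  · -- im ρ < 0 : conjugate
    have hconj : ∑ s ∈ (Finset.univ : Finset (Fin n)).powersetCard r,
        ∏ i ∈ s, ((y i : ℂ) + (lam i : ℂ) * (starRingEnd ℂ ρ)) = 0 := by
      have : ∑ s ∈ (Finset.univ : Finset (Fin n)).powersetCard r,
          ∏ i ∈ s, ((y i : ℂ) + (lam i : ℂ) * (starRingEnd ℂ ρ)) =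
          (starRingEnd ℂ) (∑ s ∈ (Finset.univ : Finset (Fin n)).powersetCard r,
            ∏ i ∈ s, ((y i : ℂ) + (lam i : ℂ) * ρ)) := by
        rw [map_sum]
        refine Finset.sum_congr rfl fun s _ => ?_
        rw [map_prod]
        refine Finset.prod_congr rfl fun i _ => ?_
        simp [Complex.conj_ofReal]
      rw [this, hev, map_zero]
    refine esym_stable n r hr hrn _ (fun i => ?_) hconj
    simp only [Complex.add_im, Complex.ofReal_im, Complex.mul_im, Complex.ofReal_re,
      Complex.conj_im, Complex.ofReal_im, zero_add]
    have := hpos i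
    nlinarith [hlt]
  · refine esym_stable n r hr hrn _ (fun i => ?_) hev
    simp only [Complex.add_im, Complex.ofReal_im, Complex.mul_im, Complex.ofReal_re,
      Complex.ofReal_im, zero_add]
    have := hpos i
    nlinarith [hgt]

lemma Pq_natDegree (n r : ℕ) (hrn : r ≤ n) (lam y : Fin n → ℝ) (hpos : ∀ i, 0 < lam i) :
    (Pq n r lam y).natDegree = r :=
  le_antisymm (Pq_natDegree_le n r lam y)
    (le_natDegree_of_ne_zero (by rw [Pq_coeff_top]; exact (esym_pos n r hrn lam hpos).ne'))

lemma Pq_roots_card (n r : ℕ) (hr : 1 ≤ r) (hrn : r ≤ n) (lam y : Fin n → ℝ)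
    (hpos : ∀ i, 0 < lam i) :
    Multiset.card (Pq n r lam y).roots = r := by
  classical
  set P := Pq n r lam y with hP
  set Q := P.map (algebraMap ℝ ℂ) with hQ
  have hinj : Function.Injective (algebraMap ℝ ℂ) := (algebraMap ℝ ℂ).injective
  have hPdeg : P.natDegree = r := Pq_natDegree n r hrn lam y hpos
  have hP0 : P ≠ 0 := fun h => by
    have := Pq_coeff_top n r lam y
    rw [← hP, h] at this
    simp at this
    exact (esym_pos n r hrn lam hpos).ne this
  have hQdeg : Q.natDegree = r := by
    rw [hQ, Polynomial.natDegree_map_eq_of_injective hinj, hPdeg]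
  have hQcard : Multiset.card Q.roots = r := by
    rw [← hQdeg]
    exact Polynomial.splits_iff_card_roots.mp (IsAlgClosed.splits Q)
  have him : ∀ ρ ∈ Q.roots, ρ.im = 0 := by
    intro ρ hρ
    have hQ0 : Q ≠ 0 := fun h => hP0 ((Polynomial.map_eq_zero_iff hinj).mp (hQ ▸ h))
    exact Pq_roots_im n r hr hrn lam y hpos ρ ((Polynomial.mem_roots hQ0).mp hρ)
  set m : Multiset ℝ := Q.roots.map Complex.re with hm
  have hre : Q.roots.map (fun ρ => ((ρ.re : ℝ) : ℂ)) = Q.roots := by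
    rw [show (fun ρ : ℂ => ((ρ.re : ℝ) : ℂ)) = fun ρ : ℂ => (ρ.re : ℂ) from rfl]
    refine Multiset.map_congr ?_ (fun ρ hρ => Complex.ext (by simp) (by simp [him ρ hρ])) |>.trans
      (Multiset.map_id _)
    rfl
  have hlc : Q.leadingCoeff = algebraMap ℝ ℂ (esym n r lam) := by
    rw [hQ, Polynomial.leadingCoeff_map_of_injective hinj, Polynomial.leadingCoeff, hPdeg]
    congr 1
    rw [hP]
    exact Pq_coeff_top n r lam y
  have key : P = Polynomial.C (esym n r lam) * (m.map (fun t => X - Polynomial.C t)).prod := by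
    apply Polynomial.map_injective (algebraMap ℝ ℂ) hinj
    rw [Polynomial.map_mul, Polynomial.map_C, Polynomial.map_multiset_prod, Multiset.map_map, hm,
      Multiset.map_map]
    rw [← hlc]
    rw [show ((Polynomial.map (algebraMap ℝ ℂ) ∘ fun t : ℝ => X - Polynomial.C t) ∘ Complex.re) =
        (fun ρ : ℂ => X - Polynomial.C (((ρ.re : ℝ) : ℂ))) from
      funext fun ρ => by simp [Function.comp, Polynomial.map_sub]]
    rw [show (fun ρ : ℂ => X - Polynomial.C (((ρ.re : ℝ) : ℂ))) =
        ((fun w : ℂ => X - Polynomial.C w) ∘ fun ρ : ℂ => ((ρ.re : ℝ) : ℂ)) from rfl,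
      ← Multiset.map_map, hre]
    exact (Polynomial.C_leadingCoeff_mul_prod_multiset_X_sub_C (hQcard.trans hQdeg.symm)).symm
  have : P.roots = m := by
    rw [key, Polynomial.roots_C_mul _ (esym_pos n r hrn lam hpos).ne',
      Polynomial.roots_multiset_prod_X_sub_C]
  rw [this, hm, Multiset.card_map, hQcard]

lemma card_roots_iterate (P : Polynomial ℝ) (k : ℕ) :
    Multiset.card P.roots ≤ Multiset.card ((Polynomial.derivative^[k]) P).roots + k := by
  induction k with
  | zero => simp
  | succ k ih =>
    have h1 := Polynomial.card_roots_le_derivative ((Polynomial.derivative^[k]) P)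
    have h2 : Polynomial.derivative ((Polynomial.derivative^[k]) P) =
        (Polynomial.derivative^[k + 1]) P := (Function.iterate_succ_apply' _ _ _).symm
    rw [h2] at h1
    omega

/-- For `λ` in the positive orthant and `2 ≤ r ≤ n`, for all `y ∈ ℝⁿ`:
`σ_r(λ) ∑_{i,j} y_i y_j ∂²σ_r/∂x_i∂x_j(λ) ≤ ((r-1)/r) (∑_j y_j ∂σ_r/∂x_j(λ))²`. -/
theorem esym_hessian_inequality (n r : ℕ) (hr : 2 ≤ r) (hrn : r ≤ n)
    (lam : Fin n → ℝ) (hpos : ∀ i, 0 < lam i) (y : Fin n → ℝ) :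
    esym n r lam *
        ∑ i : Fin n, ∑ j : Fin n, y i * y j * pd (pd (esym n r) j) i lam ≤
      ((r - 1 : ℝ) / r) * (∑ j : Fin n, y j * pd (esym n r) j lam) ^ 2 := by
  classical
  have hlam : ∀ i, lam i ≠ 0 := fun i => (hpos i).ne'
  obtain ⟨m, rfl⟩ : ∃ m, r = m + 2 := ⟨r - 2, by omega⟩
  set r := m + 2 with hrdef
  set P := Pq n r lam y with hP
  set σ := esym n r lam with hσdef
  have hσ : 0 < σ := esym_pos n r hrn lam hpos
  set c1 : ℝ := P.coeff (r - 1) with hc1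
  set c0 : ℝ := P.coeff (r - 2) with hc0
  rw [D2_eq n r hr lam y hlam, ← Pq_coeff_r1 n r (by omega) lam y hlam]
  rw [← hP, ← hc1, ← hc0]
  -- find a real root of the (r-2)-th derivative
  have hcard : Multiset.card P.roots = r := Pq_roots_card n r (by omega) hrn lam y hpos
  set R := (Polynomial.derivative^[m]) P with hRdef
  have hm2 : r - 2 = m := by omega
  have hRroots : 0 < Multiset.card R.roots := by
    have hh := card_roots_iterate P m
    rw [← hRdef] at hh
    omega
  obtain ⟨x0, hx0⟩ := Multiset.card_pos_iff_exists_mem.mp hRroots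
  have hx0root : R.eval x0 = 0 := (Polynomial.mem_roots'.mp hx0).2
  have hRdeg : R.natDegree ≤ 2 := by
    have h1 := Polynomial.natDegree_iterate_derivative P m
    rw [← hRdef, Pq_natDegree n r hrn lam y hpos] at h1
    omega
  have heval := Polynomial.eval_eq_sum_range' (n := 3) (p := R) (by omega : R.natDegree < 3) x0
  rw [hx0root] at heval
  have hco : ∀ k : ℕ, R.coeff k = ((k + m).descFactorial m : ℝ) * P.coeff (k + m) := by
    intro k
    rw [hRdef, Polynomial.coeff_iterate_derivative, nsmul_eq_mul]
  have hc2' : R.coeff 2 = ((2 + m).descFactorial m : ℝ) * σ := by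
    rw [hco 2, show 2 + m = r from by omega, Pq_coeff_top n r lam y]
  have hc1' : R.coeff 1 = (((1 + m).descFactorial m : ℕ) : ℝ) * c1 := by
    rw [hco 1, show 1 + m = r - 1 from by omega]
  have hc0' : R.coeff 0 = ((m.descFactorial m : ℕ) : ℝ) * c0 := by
    have hpm : P.coeff m = c0 := by rw [hc0, hm2]
    rw [hco 0, zero_add, hpm]
  -- numeric facts about descFactorials
  have hA2 : 2 * (((2 + m).descFactorial m : ℕ) : ℝ) =
      ((m.factorial : ℕ) : ℝ) * ((m + 2) * (m + 1)) := by
    have h1 : (2 + m).descFactorial m = m.factorial * (m + 2).choose m := by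
      rw [Nat.descFactorial_eq_factorial_mul_choose, Nat.add_comm]
    have h2 : (m + 2).choose m = (m + 2).choose 2 := by
      rw [← Nat.choose_symm (by omega)]
      norm_num
    have h3 : (m + 2) * (m + 1) = (m + 2).choose 2 * 2 := by
      have h4 := Nat.add_one_mul_choose_eq (m + 1) 1
      simp only [Nat.succ_eq_add_one, Nat.choose_one_right] at h4
      norm_num at h4
      rw [show m + 1 + 1 = m + 2 from rfl] at h4
      omega
    have : 2 * (2 + m).descFactorial m = m.factorial * ((m + 2) * (m + 1)) := by
      rw [h1, h2, h3]; ring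
    exact_mod_cast congrArg (fun t : ℕ => (t : ℝ)) this
  have hB : (((1 + m).descFactorial m : ℕ) : ℝ) = ((m.factorial : ℕ) : ℝ) * (m + 1) := by
    have h1 : (1 + m).descFactorial m = m.factorial * (m + 1).choose m := by
      rw [Nat.descFactorial_eq_factorial_mul_choose, Nat.add_comm]
    have h2 : (m + 1).choose m = m + 1 := Nat.choose_succ_self_right m
    have : (1 + m).descFactorial m = m.factorial * (m + 1) := by rw [h1, h2]
    exact_mod_cast congrArg (fun t : ℕ => (t : ℝ)) this
  have hC : ((m.descFactorial m : ℕ) : ℝ) = ((m.factorial : ℕ) : ℝ) := by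
    exact_mod_cast congrArg (fun t : ℕ => (t : ℝ)) (Nat.descFactorial_self m)
  set F : ℝ := ((m.factorial : ℕ) : ℝ) with hF
  have hFpos : 0 < F := by positivity
  -- the quadratic equation
  have heq0 : R.coeff 2 * x0 ^ 2 + R.coeff 1 * x0 + R.coeff 0 = 0 := by
    rw [Finset.sum_range_succ, Finset.sum_range_succ, Finset.sum_range_one] at heval
    linear_combination -heval
  rw [hc2', hc1', hc0', hC] at heq0
  have heq2 : F * (((m + 2) * (m + 1)) * σ * x0 ^ 2 + 2 * (m + 1) * c1 * x0 + 2 * c0) = 0 := by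
    rw [hB] at heq0
    linear_combination (2 : ℝ) * heq0 - (σ * x0 ^ 2) * hA2
  have hm0 : ((m + 2) * (m + 1)) * σ * x0 ^ 2 + 2 * ((m : ℝ) + 1) * c1 * x0 + 2 * c0 = 0 :=
    (mul_eq_zero.mp heq2).resolve_left hFpos.ne'
  have hdisc : (2 * ((m : ℝ) + 1) * c1) ^ 2 - 4 * (((m + 2) * (m + 1)) * σ) * (2 * c0) =
      (2 * (((m : ℝ) + 2) * ((m : ℝ) + 1)) * σ * x0 + 2 * ((m : ℝ) + 1) * c1) ^ 2 := by
    linear_combination (-(4 * (((m : ℝ) + 2) * ((m : ℝ) + 1)) * σ)) * hm0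
  have hd : 8 * ((m : ℝ) + 2) * ((m : ℝ) + 1) * σ * c0 ≤ 4 * ((m : ℝ) + 1) ^ 2 * c1 ^ 2 := by
    nlinarith [sq_nonneg (2 * (((m : ℝ) + 2) * ((m : ℝ) + 1)) * σ * x0 + 2 * ((m : ℝ) + 1) * c1)]
  -- final arithmetic
  have hrcast : ((r : ℕ) : ℝ) = (m : ℝ) + 2 := by rw [hrdef]; push_cast; ring
  rw [hrcast]
  have hpos2 : (0 : ℝ) < (m : ℝ) + 2 := by positivity
  rw [div_mul_eq_mul_div, le_div_iff₀ hpos2]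
  nlinarith [hd, hσ]
end
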